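/- Let V be an optimal computer and let T be a real with T ≥ 1. Then for every enumeration p₁, p₂, … of Dom V, the partial energies E_k(T) = Z_k(T)^{−1} Σ_{i=1}^k |p_i| 2^{−|p_i|/T} tend to ∞ and the partial entropies S_k(T) = (E_k(T) − F_k(T))/T tend to ∞ as k → ∞, where Z_k(T) = Σ_{i=1}^k 2^{−|p_i|/T} and F_k(T) = −T log₂ Z_k(T). -/

import Mathlib

open Filter Topology

/-- A set of finite binary strings is prefix-free if no string in it is a
proper prefix of another string in it. -/
def PrefixFree (S : Set (List Bool)) : Prop :=
  ∀ p ∈ S, ∀ q ∈ S, p <+: q → p = q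

/-- A computer: a partial recursive function from finite binary strings to
finite binary strings whose domain is a nonempty prefix-free set. -/
structure Computer where
  f : List Bool →. List Bool
  partrec : Partrec f
  dom_nonempty : f.Dom.Nonempty
  dom_prefixFree : PrefixFree f.Dom

/-- A computer `U` is optimal if for each computer `C` there is `d ∈ ℕ` such
that every `p ∈ Dom C` admits `q` with `U(q) = C(p)` and `|q| ≤ |p| + d`. -/
def Optimal (U : Computer) : Prop :=
  ∀ C : Computer, ∃ d : ℕ, ∀ p ∈ C.f.Dom,
    ∃ q : List Bool, U.f q = C.f p ∧ q.length ≤ p.length + d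

/-- `H_C(s)`: the length of a shortest program for `C` printing `s`. -/
noncomputable def complexity (C : Computer) (s : List Bool) : ℕ :=
  sInf {n | ∃ p : List Bool, s ∈ C.f p ∧ p.length = n}

/-- The `i`-th bit (for `i = 0, 1, 2, …`) of the base-two expansion of
`α - ⌊α⌋` with infinitely many zeros. -/
noncomputable def bitOf (α : ℝ) (i : ℕ) : Bool :=
  decide (⌊(α - ⌊α⌋) * 2 ^ (i + 1)⌋ % 2 = 1)

/-- `α↾n`: the first `n` bits of the base-two expansion of `α - ⌊α⌋`
with infinitely many zeros. -/
noncomputable def firstBits (α : ℝ) (n : ℕ) : List Bool :=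
  (List.range n).map (bitOf α)

/-- A real `α` is computable if some total recursive `f : ℕ⁺ → ℚ` satisfies
`|α - f n| < 1/n` for all `n ≥ 1`. -/
def ComputableReal (α : ℝ) : Prop :=
  ∃ f : ℕ → ℚ, Computable f ∧ ∀ n : ℕ, 0 < n → |α - (f n : ℝ)| < 1 / n

/-- `α` is weakly Chaitin `T`-random (w.r.t. the computer `U`). -/
def WeaklyChaitinTRandom (U : Computer) (T α : ℝ) : Prop :=
  ∃ c : ℕ, ∀ n : ℕ, 0 < n → T * n - c ≤ (complexity U (firstBits α n) : ℝ)

/-- `α` is Chaitin `T`-random (w.r.t. the computer `U`). -/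
def ChaitinTRandom (U : Computer) (T α : ℝ) : Prop :=
  Tendsto (fun n : ℕ => (complexity U (firstBits α n) : ℝ) - T * n) atTop atTop

/-- `α` is `T`-compressible (w.r.t. the computer `U`): `H(α↾n) ≤ Tn + o(n)`. -/
def TCompressible (U : Computer) (T α : ℝ) : Prop :=
  ∃ g : ℕ → ℝ, Tendsto (fun n : ℕ => g n / n) atTop (nhds 0) ∧
    ∀ n : ℕ, 0 < n → (complexity U (firstBits α n) : ℝ) ≤ T * n + g n

/-- The Boltzmann factor `2^(-|p|/T)` of a program `p`. -/
noncomputable def boltzmann (T : ℝ) (p : List Bool) : ℝ :=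
  (2 : ℝ) ^ (-(p.length : ℝ) / T)

/-- Partition function `Z_C(T) = Σ_{p ∈ Dom C} 2^(-|p|/T)`. -/
noncomputable def Zfun (C : Computer) (T : ℝ) : ℝ :=
  ∑' p : C.f.Dom, boltzmann T p.1

/-- Free energy `F_C(T) = -T log₂ Z_C(T)`. -/
noncomputable def Ffun (C : Computer) (T : ℝ) : ℝ :=
  -T * Real.logb 2 (Zfun C T)

/-- Energy `E_C(T) = Z_C(T)⁻¹ Σ_{p ∈ Dom C} |p| 2^(-|p|/T)`. -/
noncomputable def Efun (C : Computer) (T : ℝ) : ℝ :=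
  (Zfun C T)⁻¹ * ∑' p : C.f.Dom, (p.1.length : ℝ) * boltzmann T p.1

/-- Statistical mechanical entropy `S_C(T) = (E_C(T) - F_C(T))/T`. -/
noncomputable def Sfun (C : Computer) (T : ℝ) : ℝ :=
  (Efun C T - Ffun C T) / T

/-- `𝒵(V)`: the set of `T ∈ (0,1)` with `Z_V(T)` computable. -/
def setZ (V : Computer) : Set ℝ := {T | T ∈ Set.Ioo 0 1 ∧ ComputableReal (Zfun V T)}

/-- `ℱ(V)`: the set of `T ∈ (0,1)` with `F_V(T)` computable. -/
def setF (V : Computer) : Set ℝ := {T | T ∈ Set.Ioo 0 1 ∧ ComputableReal (Ffun V T)}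

/-- `ℰ(V)`: the set of `T ∈ (0,1)` with `E_V(T)` computable. -/
def setE (V : Computer) : Set ℝ := {T | T ∈ Set.Ioo 0 1 ∧ ComputableReal (Efun V T)}

/-- `𝒮(V)`: the set of `T ∈ (0,1)` with `S_V(T)` computable. -/
def setS (V : Computer) : Set ℝ := {T | T ∈ Set.Ioo 0 1 ∧ ComputableReal (Sfun V T)}

/-- `FP_w` (w.r.t. the optimal computer `U` fixing `H`): the set of `T ∈ (0,1)`
that are weakly Chaitin `T`-random and `T`-compressible. -/
def FPw (U : Computer) : Set ℝ :=
  {T | T ∈ Set.Ioo 0 1 ∧ WeaklyChaitinTRandom U T T ∧ TCompressible U T T}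

/-- `FP` (w.r.t. the optimal computer `U` fixing `H`): the set of `T ∈ (0,1)`
that are Chaitin `T`-random and `T`-compressible. -/
def FP (U : Computer) : Set ℝ :=
  {T | T ∈ Set.Ioo 0 1 ∧ ChaitinTRandom U T T ∧ TCompressible U T T}

/-- A computer is physically reasonable if its domain contains two strings of
different lengths. -/
def PhysicallyReasonable (C : Computer) : Prop :=
  ∃ p ∈ C.f.Dom, ∃ q ∈ C.f.Dom, p.length ≠ q.length

/-- A computable measure machine: `Z_C(1)` is a computable real. -/
def ComputableMeasureMachine (C : Computer) : Prop :=
  ComputableReal (Zfun C 1)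

/-- `D` is the composition `C₀ ⊘ C₁ ⊘ ⋯ ⊘ C_{N-1}`: its domain consists of the
concatenations `p₀p₁⋯p_{N-1}` with each `pᵢ ∈ Dom Cᵢ`, and on such a
concatenation it returns `C₀(p₀)`. -/
def IsComposition {N : ℕ} (C : Fin N → Computer) (hN : 0 < N) (D : Computer) : Prop :=
  (∀ l, l ∈ D.f.Dom ↔
      ∃ ps : Fin N → List Bool, (∀ i, ps i ∈ (C i).f.Dom) ∧ l = (List.ofFn ps).flatten) ∧
  (∀ ps : Fin N → List Bool, (∀ i, ps i ∈ (C i).f.Dom) →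
      D.f ((List.ofFn ps).flatten) = (C ⟨0, hN⟩).f (ps ⟨0, hN⟩))

/-- A sequence of computers is recursive if a single partial recursive function
uniformly computes all of them. -/
def RecursiveSeq (V : ℕ → Computer) : Prop :=
  ∃ F : ℕ × List Bool →. List Bool, Partrec F ∧ ∀ n p, (V n).f p = F (n, p)
namespace EnergyAux

open List (Vector)

/-- Decoding function: accepts lists of the form `1^m 0 s` with `|s| = 2^m`. -/
def dec (l : List Bool) : Option (List Bool) :=
  if l.length = l.idxOf false + 1 + 2 ^ l.idxOf false then some l else none

theorem primrec_dec : Primrec dec := by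
  have hidx : Primrec fun l : List Bool => l.idxOf false :=
    Primrec.list_idxOf.comp (Primrec.const false) Primrec.id
  have hpow : Primrec₂ ((· ^ ·) : ℕ → ℕ → ℕ) := Primrec₂.unpaired'.1 Nat.Primrec.pow
  have hrhs : Primrec fun l : List Bool => l.idxOf false + 1 + 2 ^ l.idxOf false :=
    Primrec.nat_add.comp (Primrec.nat_add.comp hidx (Primrec.const 1))
      (hpow.comp (Primrec.const 2) hidx)
  exact Primrec.ite (PrimrecRel.comp Primrec.eq Primrec.list_length hrhs)
    (Primrec.option_some.comp Primrec.id) (Primrec.const none)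

theorem dom_iff (l : List Bool) :
    (Part.ofOption (dec l)).Dom ↔
      l.length = l.idxOf false + 1 + 2 ^ l.idxOf false := by
  unfold dec
  split_ifs with h <;> simp [Part.ofOption_dom, h]

theorem eval_eq {l : List Bool}
    (h : l.length = l.idxOf false + 1 + 2 ^ l.idxOf false) :
    Part.ofOption (dec l) = Part.some l := by
  unfold dec
  rw [if_pos h]
  rfl

theorem indexOf_encode (m : ℕ) (s : List Bool) :
    (List.replicate m true ++ false :: s).idxOf false = m := by
  induction m with
  | zero => simp
  | succ m ih =>
      rw [List.replicate_succ, List.cons_append,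
        List.idxOf_cons_ne _ (by decide : true ≠ false), ih]

theorem encode_cond {m : ℕ} {s : List Bool} (hs : s.length = 2 ^ m) :
    (List.replicate m true ++ false :: s).length =
      (List.replicate m true ++ false :: s).idxOf false + 1 +
        2 ^ ((List.replicate m true ++ false :: s).idxOf false) := by
  rw [indexOf_encode]
  simp [hs]
  omega

/-- The auxiliary computer: the identity on the prefix-free set
`{1^m 0 s : |s| = 2^m}`. -/
def C : Computer where
  f := fun l => Part.ofOption (dec l)
  partrec := Computable.ofOption primrec_dec.to_comp
  dom_nonempty := by
    refine ⟨[false, true], ?_⟩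
    have : ([false, true] : List Bool).length =
        ([false, true] : List Bool).idxOf false + 1 +
          2 ^ (([false, true] : List Bool).idxOf false) := by decide
    exact (dom_iff _).2 this
  dom_prefixFree := by
    intro a ha b hb hab
    have ha' := (dom_iff a).1 ha
    have hb' := (dom_iff b).1 hb
    obtain ⟨t, rfl⟩ := hab
    have hmem : false ∈ a := by
      have hpos : 0 < 2 ^ a.idxOf false := pow_pos (by norm_num) _
      have : a.idxOf false < a.length := by omega
      exact List.idxOf_lt_length_iff.1 this
    have hidx : (a ++ t).idxOf false = a.idxOf false :=
      List.idxOf_append_of_mem hmem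
    have hlen : (a ++ t).length = a.length := by rw [hb', hidx, ← ha']
    have : t.length = 0 := by
      rw [List.length_append] at hlen; omega
    rw [List.length_eq_zero_iff.1 this, List.append_nil]

theorem key_lb {T x R : ℝ} (hT : 1 ≤ T) (hx1 : 1 ≤ x) (hxR : x ≤ R) :
    min ((2 : ℝ) ^ (-(R / 2))) (R / 2 * (2 : ℝ) ^ (-R)) ≤ x * (2 : ℝ) ^ (-x / T) := by
  have hx0 : (0 : ℝ) ≤ x := by linarith
  have hmono : ∀ {u v : ℝ}, u ≤ v → (2 : ℝ) ^ u ≤ (2 : ℝ) ^ v := fun h =>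
    Real.rpow_le_rpow_of_exponent_le one_le_two h
  have h1 : (2 : ℝ) ^ (-x) ≤ (2 : ℝ) ^ (-x / T) := by
    apply hmono
    rw [neg_div]
    exact neg_le_neg (div_le_self hx0 hT)
  rcases le_or_gt x (R / 2) with h | h
  · refine le_trans (min_le_left _ _) ?_
    calc (2 : ℝ) ^ (-(R / 2)) ≤ (2 : ℝ) ^ (-x) := hmono (by linarith)
      _ ≤ x * (2 : ℝ) ^ (-x) :=
          le_mul_of_one_le_left (Real.rpow_nonneg (by norm_num) _) hx1
      _ ≤ x * (2 : ℝ) ^ (-x / T) := mul_le_mul_of_nonneg_left h1 hx0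
  · refine le_trans (min_le_right _ _) ?_
    calc R / 2 * (2 : ℝ) ^ (-R)
        ≤ x * (2 : ℝ) ^ (-R) :=
          mul_le_mul_of_nonneg_right h.le (Real.rpow_nonneg (by norm_num) _)
      _ ≤ x * (2 : ℝ) ^ (-x) :=
          mul_le_mul_of_nonneg_left (hmono (by linarith)) hx0
      _ ≤ x * (2 : ℝ) ^ (-x / T) := mul_le_mul_of_nonneg_left h1 hx0

theorem two_mul_le_two_pow {m : ℕ} (h : 3 ≤ m) : 2 * m ≤ 2 ^ m := by
  induction m, h using Nat.le_induction with
  | base => decide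
  | succ n hn ih =>
      have h2 : 2 ≤ 2 ^ n := by
        calc 2 = 2 ^ 1 := rfl
        _ ≤ 2 ^ n := Nat.pow_le_pow_right (by norm_num) (by omega)
      have : 2 ^ (n + 1) = 2 ^ n + 2 ^ n := by rw [pow_succ]; omega
      omega

theorem nat_lb {d m : ℕ} (h : d + 3 ≤ m) : m + 1 + d ≤ 2 ^ m := by
  have := two_mul_le_two_pow (show 3 ≤ m by omega)
  omega

theorem eps_le {d m : ℕ} (h : d + 3 ≤ m) :
    (2 : ℝ) ^ (-(2 + (d : ℝ))) ≤ ((2 ^ 2 ^ m : ℕ) : ℝ) *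
      min ((2 : ℝ) ^ (-(((m + 1 + 2 ^ m + d : ℕ) : ℝ) / 2)))
          (((m + 1 + 2 ^ m + d : ℕ) : ℝ) / 2 *
            (2 : ℝ) ^ (-((m + 1 + 2 ^ m + d : ℕ) : ℝ))) := by
  set R : ℝ := ((m + 1 + 2 ^ m + d : ℕ) : ℝ) with hR
  have hA' : ((2 ^ 2 ^ m : ℕ) : ℝ) = (2 : ℝ) ^ (((2 ^ m : ℕ) : ℝ)) := by
    rw [Real.rpow_natCast]
    push_cast
    ring
  have hRa : R = ((2 ^ m : ℕ) : ℝ) + ((m : ℝ) + 1 + (d : ℝ)) := by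
    rw [hR]; push_cast; ring
  have hnat : (m : ℝ) + 1 + (d : ℝ) ≤ ((2 ^ m : ℕ) : ℝ) := by
    exact_mod_cast nat_lb h
  have hε1 : (2 : ℝ) ^ (-(2 + (d : ℝ))) ≤ 1 :=
    Real.rpow_le_one_of_one_le_of_nonpos one_le_two
      (neg_nonpos.2 (by positivity))
  rcases le_total ((2 : ℝ) ^ (-(R / 2))) (R / 2 * (2 : ℝ) ^ (-R)) with hmin | hmin
  · rw [min_eq_left hmin, hA', ← Real.rpow_add two_pos]
    refine hε1.trans ?_
    nth_rewrite 1 [show (1 : ℝ) = (2 : ℝ) ^ (0 : ℝ) by rw [Real.rpow_zero]]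
    apply Real.rpow_le_rpow_of_exponent_le one_le_two
    rw [hRa] at *
    linarith
  · rw [min_eq_right hmin]
    have eAB : ((2 ^ 2 ^ m : ℕ) : ℝ) * (2 : ℝ) ^ (-R)
        = (2 : ℝ) ^ (-((m : ℝ) + 1 + (d : ℝ))) := by
      rw [hA', ← Real.rpow_add two_pos]
      congr 1
      rw [hRa]; ring
    have e1 : ((2 ^ 2 ^ m : ℕ) : ℝ) * (R / 2 * (2 : ℝ) ^ (-R))
        = R / 2 * (((2 ^ 2 ^ m : ℕ) : ℝ) * (2 : ℝ) ^ (-R)) := by ring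
    rw [e1, eAB]
    have e2 : (2 : ℝ) ^ (-(2 + (d : ℝ)))
        = (2 : ℝ) ^ ((m : ℝ) - 1) * (2 : ℝ) ^ (-((m : ℝ) + 1 + (d : ℝ))) := by
      rw [← Real.rpow_add two_pos]
      congr 1
      ring
    rw [e2]
    apply mul_le_mul_of_nonneg_right _ (Real.rpow_nonneg (by norm_num) _)
    have e3 : (2 : ℝ) ^ ((m : ℝ) - 1) = ((2 ^ m : ℕ) : ℝ) / 2 := by
      rw [Real.rpow_sub two_pos, Real.rpow_one, Real.rpow_natCast]
      push_cast
      ring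
    rw [e3, hRa]
    have : (0 : ℝ) ≤ (m : ℝ) + 1 + (d : ℝ) := by positivity
    linarith

end EnergyAux


theorem energy_entropy_diverge (V : Computer) (hV : Optimal V)
    (T : ℝ) (hT : 1 ≤ T) (p : ℕ → List Bool)
    (hinj : Function.Injective p) (hran : Set.range p = V.f.Dom) :
    Tendsto (fun k : ℕ =>
        (∑ i ∈ Finset.range k, boltzmann T (p i))⁻¹ *
          ∑ i ∈ Finset.range k, ((p i).length : ℝ) * boltzmann T (p i)) atTop atTop ∧
    Tendsto (fun k : ℕ =>
        ((∑ i ∈ Finset.range k, boltzmann T (p i))⁻¹ *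
            (∑ i ∈ Finset.range k, ((p i).length : ℝ) * boltzmann T (p i)) -
          (-T * Real.logb 2 (∑ i ∈ Finset.range k, boltzmann T (p i)))) / T)
      atTop atTop := by
  classical
  have hT0 : (0 : ℝ) < T := lt_of_lt_of_le one_pos hT
  have hwpos : ∀ l : List Bool, 0 < boltzmann T l := fun l =>
    Real.rpow_pos_of_pos (by norm_num) _
  have htermnn : ∀ i : ℕ, 0 ≤ ((p i).length : ℝ) * boltzmann T (p i) := fun i =>
    mul_nonneg (Nat.cast_nonneg _) (hwpos _).le
  -- every element of the domain of `V` is nonempty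
  have hone : ∀ r ∈ V.f.Dom, 1 ≤ r.length := by
    intro r hr
    by_contra hcon
    have hr0 : r = [] := List.length_eq_zero_iff.1 (by omega)
    subst hr0
    have hp0 : p 0 ∈ V.f.Dom := by rw [← hran]; exact ⟨0, rfl⟩
    have hp1 : p 1 ∈ V.f.Dom := by rw [← hran]; exact ⟨1, rfl⟩
    have e0 := V.dom_prefixFree [] hr (p 0) hp0 List.nil_prefix
    have e1 := V.dom_prefixFree [] hr (p 1) hp1 List.nil_prefix
    exact absurd (hinj (e0.symm.trans e1)) (by norm_num)
  -- Step 1 : the numerators tend to infinity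
  have hNdiv : Tendsto
      (fun k : ℕ => ∑ i ∈ Finset.range k, ((p i).length : ℝ) * boltzmann T (p i))
      atTop atTop := by
    rw [← not_summable_iff_tendsto_nat_atTop_of_nonneg htermnn]
    intro hsum
    obtain ⟨d, hd⟩ := hV EnergyAux.C
    set lf : (x : (m : ℕ) × List.Vector Bool (2 ^ m)) → List Bool :=
      fun x => List.replicate x.1 true ++ false :: x.2.toList with hlf
    have hcond : ∀ x, (lf x).length =
        (lf x).idxOf false + 1 + 2 ^ (lf x).idxOf false := by
      rintro ⟨m, s⟩
      simp only [hlf]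
      exact EnergyAux.encode_cond s.toList_length
    have hCeval : ∀ x, EnergyAux.C.f (lf x) = Part.some (lf x) := fun x =>
      EnergyAux.eval_eq (hcond x)
    have hCdom : ∀ x, lf x ∈ EnergyAux.C.f.Dom := fun x =>
      (PFun.mem_dom _ _).2 ⟨lf x, by rw [hCeval]; exact Part.mem_some _⟩
    have hq' : ∀ x, ∃ r, V.f r = Part.some (lf x) ∧ r.length ≤ (lf x).length + d := by
      intro x
      obtain ⟨r, hr1, hr2⟩ := hd (lf x) (hCdom x)
      exact ⟨r, by rw [hr1, hCeval], hr2⟩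
    choose q hq1 hq2 using hq'
    have hqdom : ∀ x, q x ∈ V.f.Dom := fun x =>
      (PFun.mem_dom _ _).2 ⟨lf x, by rw [hq1]; exact Part.mem_some _⟩
    have hqr : ∀ x, ∃ i, p i = q x := by
      intro x
      have hs := hqdom x
      rw [← hran] at hs
      exact hs
    choose ψ hψ using hqr
    have hlfinj : Function.Injective lf := by
      rintro ⟨m, s⟩ ⟨m', s'⟩ h
      simp only [hlf] at h
      have hm : m = m' := by
        have hcg := congrArg (List.idxOf false) h
        rwa [EnergyAux.indexOf_encode, EnergyAux.indexOf_encode] at hcg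
      subst hm
      have hs : s.toList = s'.toList := by
        have h2 := List.append_cancel_left h
        injection h2
      have : s = s' := List.Vector.toList_injective hs
      rw [this]
    have hψinj : Function.Injective ψ := by
      intro x y hxy
      apply hlfinj
      have h1 : q x = q y := by rw [← hψ x, ← hψ y, hxy]
      have h2 : Part.some (lf x) = Part.some (lf y) := by
        rw [← hq1 x, ← hq1 y, h1]
      exact Part.some_injective h2
    have hG : Summable fun x : (m : ℕ) × List.Vector Bool (2 ^ m) =>
        ((p (ψ x)).length : ℝ) * boltzmann T (p (ψ x)) := by
      have := hsum.comp_injective hψinj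
      exact this
    have hfib : Summable fun m : ℕ => ∑' s : List.Vector Bool (2 ^ m),
        ((p (ψ ⟨m, s⟩)).length : ℝ) * boltzmann T (p (ψ ⟨m, s⟩)) :=
      hG.sigma
    have hε0 : (0 : ℝ) < (2 : ℝ) ^ (-(2 + (d : ℝ))) :=
      Real.rpow_pos_of_pos (by norm_num) _
    have hlow : ∀ m : ℕ, d + 3 ≤ m →
        (2 : ℝ) ^ (-(2 + (d : ℝ))) ≤ ∑' s : List.Vector Bool (2 ^ m),
          ((p (ψ ⟨m, s⟩)).length : ℝ) * boltzmann T (p (ψ ⟨m, s⟩)) := by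
      intro m hm
      have hxle : ∀ s : List.Vector Bool (2 ^ m),
          ((p (ψ ⟨m, s⟩)).length : ℝ) ≤ ((m + 1 + 2 ^ m + d : ℕ) : ℝ) := by
        intro s
        have h2 := hq2 ⟨m, s⟩
        have hlen : (lf ⟨m, s⟩).length = m + 1 + 2 ^ m := by
          simp only [hlf]
          simp [s.toList_length]
          omega
        rw [hψ]
        exact_mod_cast (by omega : (q ⟨m, s⟩).length ≤ m + 1 + 2 ^ m + d)
      have hx1 : ∀ s : List.Vector Bool (2 ^ m),
          (1 : ℝ) ≤ ((p (ψ ⟨m, s⟩)).length : ℝ) := by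
        intro s
        have := hone (p (ψ ⟨m, s⟩)) (by rw [hψ]; exact hqdom _)
        exact_mod_cast this
      have hterm : ∀ s : List.Vector Bool (2 ^ m),
          min ((2 : ℝ) ^ (-(((m + 1 + 2 ^ m + d : ℕ) : ℝ) / 2)))
              (((m + 1 + 2 ^ m + d : ℕ) : ℝ) / 2 *
                (2 : ℝ) ^ (-((m + 1 + 2 ^ m + d : ℕ) : ℝ)))
            ≤ ((p (ψ ⟨m, s⟩)).length : ℝ) * boltzmann T (p (ψ ⟨m, s⟩)) := by
        intro s
        have := EnergyAux.key_lb hT (hx1 s) (hxle s)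
        simpa [boltzmann, neg_div] using this
      have hcard : Fintype.card (List.Vector Bool (2 ^ m)) = 2 ^ 2 ^ m := by
        rw [card_vector, Fintype.card_bool]
      have hsum_lb := Finset.card_nsmul_le_sum Finset.univ
        (fun s : List.Vector Bool (2 ^ m) =>
          ((p (ψ ⟨m, s⟩)).length : ℝ) * boltzmann T (p (ψ ⟨m, s⟩)))
        _ (fun s _ => hterm s)
      rw [Finset.card_univ, hcard, nsmul_eq_mul] at hsum_lb
      rw [tsum_fintype]
      exact le_trans (EnergyAux.eps_le hm) hsum_lb
    have h1 := hfib.tendsto_atTop_zero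
    have h2 := h1.eventually (gt_mem_nhds hε0)
    have h3 : ∀ᶠ m : ℕ in atTop, d + 3 ≤ m := eventually_ge_atTop _
    obtain ⟨m, hm2, hm3⟩ := (h2.and h3).exists
    exact absurd (hlow m hm3) (not_le.2 hm2)
  -- Step 2 : the energies tend to infinity
  have goal1 : Tendsto (fun k : ℕ =>
      (∑ i ∈ Finset.range k, boltzmann T (p i))⁻¹ *
        ∑ i ∈ Finset.range k, ((p i).length : ℝ) * boltzmann T (p i)) atTop atTop := by
    rw [tendsto_atTop]
    intro b
    set b' : ℝ := max b 1 with hb'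
    have hb'1 : (1 : ℝ) ≤ b' := le_max_right _ _
    have hb'0 : (0 : ℝ) < b' := by linarith
    set n₀ : ℕ := ⌈(2 * b' : ℝ)⌉₊ with hn₀def
    have hn₀ge : 2 * b' ≤ (n₀ : ℝ) := Nat.le_ceil _
    have hn₀pos : (0 : ℝ) < (n₀ : ℝ) := by linarith
    have hIfin : (p ⁻¹' {l : List Bool | l.length ≤ n₀}).Finite :=
      (List.finite_length_le Bool n₀).preimage hinj.injOn
    set A : ℝ := ∑ i ∈ hIfin.toFinset, boltzmann T (p i) with hAdef
    have hA0 : 0 ≤ A := Finset.sum_nonneg fun i _ => (hwpos _).le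
    have hZle : ∀ k : ℕ, (∑ i ∈ Finset.range k, boltzmann T (p i)) ≤
        A + (∑ i ∈ Finset.range k, ((p i).length : ℝ) * boltzmann T (p i)) / n₀ := by
      intro k
      rw [Finset.sum_div,
        ← Finset.sum_filter_add_sum_filter_not (Finset.range k)
          (fun i => (p i).length ≤ n₀) (fun i => boltzmann T (p i))]
      apply add_le_add
      · apply Finset.sum_le_sum_of_subset_of_nonneg
        · intro i hi
          simp only [Finset.mem_filter] at hi
          exact hIfin.mem_toFinset.2 hi.2
        · intro i _ _
          exact (hwpos _).le
      · calc ∑ i ∈ (Finset.range k).filter (fun i => ¬(p i).length ≤ n₀),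
              boltzmann T (p i)
            ≤ ∑ i ∈ (Finset.range k).filter (fun i => ¬(p i).length ≤ n₀),
              ((p i).length : ℝ) * boltzmann T (p i) / n₀ := by
              apply Finset.sum_le_sum
              intro i hi
              simp only [Finset.mem_filter, not_le] at hi
              rw [le_div_iff₀ hn₀pos]
              have hcast : (n₀ : ℝ) ≤ ((p i).length : ℝ) := by
                exact_mod_cast hi.2.le
              nlinarith [(hwpos (p i)).le]
          _ ≤ ∑ i ∈ Finset.range k, ((p i).length : ℝ) * boltzmann T (p i) / n₀ := by
              apply Finset.sum_le_sum_of_subset_of_nonneg (Finset.filter_subset _ _)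
              intro i _ _
              exact div_nonneg (htermnn i) hn₀pos.le
    filter_upwards [hNdiv.eventually_ge_atTop (2 * A * b'),
      Filter.eventually_ge_atTop 1] with k hk1 hk2
    have hZpos : 0 < ∑ i ∈ Finset.range k, boltzmann T (p i) :=
      Finset.sum_pos (fun i _ => hwpos _) (Finset.nonempty_range_iff.2 (by omega))
    have hN0 : 0 ≤ ∑ i ∈ Finset.range k, ((p i).length : ℝ) * boltzmann T (p i) :=
      Finset.sum_nonneg fun i _ => htermnn i
    refine le_trans (le_max_left b 1) ?_
    rw [le_inv_mul_iff₀ hZpos]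
    have hhalf : b' / n₀ ≤ 1 / 2 := by
      rw [div_le_div_iff₀ hn₀pos two_pos]
      linarith
    calc (∑ i ∈ Finset.range k, boltzmann T (p i)) * b'
        ≤ (A + (∑ i ∈ Finset.range k, ((p i).length : ℝ) * boltzmann T (p i)) / n₀) * b' :=
          mul_le_mul_of_nonneg_right (hZle k) hb'0.le
      _ = A * b' + (∑ i ∈ Finset.range k, ((p i).length : ℝ) * boltzmann T (p i)) * (b' / n₀) := by
          ring
      _ ≤ A * b' + (∑ i ∈ Finset.range k, ((p i).length : ℝ) * boltzmann T (p i)) * (1 / 2) := by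
          have := mul_le_mul_of_nonneg_left hhalf hN0
          linarith
      _ ≤ ∑ i ∈ Finset.range k, ((p i).length : ℝ) * boltzmann T (p i) := by
          linarith
  refine ⟨goal1, ?_⟩
  -- Step 3 : the entropies tend to infinity
  have hZ1pos : 0 < ∑ i ∈ Finset.range 1, boltzmann T (p i) := by
    rw [Finset.sum_range_one]
    exact hwpos _
  have hmain : Tendsto (fun k : ℕ =>
      ((∑ i ∈ Finset.range k, boltzmann T (p i))⁻¹ *
        (∑ i ∈ Finset.range k, ((p i).length : ℝ) * boltzmann T (p i)) +
        T * Real.logb 2 (∑ i ∈ Finset.range 1, boltzmann T (p i))) / T) atTop atTop :=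
    (tendsto_atTop_add_const_right atTop _ goal1).atTop_div_const hT0
  apply tendsto_atTop_mono' atTop ?_ hmain
  filter_upwards [Filter.eventually_ge_atTop 1] with k hk
  have hZmono : (∑ i ∈ Finset.range 1, boltzmann T (p i)) ≤
      ∑ i ∈ Finset.range k, boltzmann T (p i) :=
    Finset.sum_le_sum_of_subset_of_nonneg (Finset.range_subset_range.2 hk)
      (fun i _ _ => (hwpos _).le)
  have hlog : Real.logb 2 (∑ i ∈ Finset.range 1, boltzmann T (p i)) ≤
      Real.logb 2 (∑ i ∈ Finset.range k, boltzmann T (p i)) :=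
    Real.logb_le_logb_of_le one_lt_two hZ1pos hZmono
  have hnum : (∑ i ∈ Finset.range k, boltzmann T (p i))⁻¹ *
        (∑ i ∈ Finset.range k, ((p i).length : ℝ) * boltzmann T (p i)) +
        T * Real.logb 2 (∑ i ∈ Finset.range 1, boltzmann T (p i)) ≤
      (∑ i ∈ Finset.range k, boltzmann T (p i))⁻¹ *
        (∑ i ∈ Finset.range k, ((p i).length : ℝ) * boltzmann T (p i)) -
        (-T * Real.logb 2 (∑ i ∈ Finset.range k, boltzmann T (p i))) := by
    have := mul_le_mul_of_nonneg_left hlog hT0.le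
    linarith
  exact (div_le_div_iff_of_pos_right hT0).2 hnum
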